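/- For every H ∈ (1/4, 1/2) and every θ ∈ (0, 1/2 − H), the double integral ∫_ℝ ∫_ℝ |e^{−(x+h)²} − e^{−x²}|² |h|^{2H−2} |x|^{2θ} dh dx is finite. -/

import Mathlib

open MeasureTheory Set Real

section Stmt1Aux

private lemma integrable_of_even' {f : ℝ → ℝ} (he : ∀ x, f (-x) = f x)
    (h : IntegrableOn f (Ioi 0)) : Integrable f := by
  rw [← integrableOn_univ, ← Iio_union_Ici (a := (0:ℝ)), integrableOn_union,
    integrableOn_Ici_iff_integrableOn_Ioi]
  refine ⟨?_, h⟩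
  rw [← (Measure.measurePreserving_neg (volume : Measure ℝ)).integrableOn_comp_preimage
      (Homeomorph.neg ℝ).measurableEmbedding]
  simpa only [Function.comp_def, neg_preimage, neg_Iio, neg_neg, neg_zero, he] using h

private lemma aux_exp3 {c : ℝ} (hc0 : 0 ≤ c) (hc : c ≤ 3) (t : ℝ) (ht : 0 ≤ t) :
    (1 + t) ^ c ≤ Real.exp (3 * t) := by
  have h1 : (1 + t) ^ c ≤ (Real.exp t) ^ c := by
    apply Real.rpow_le_rpow (by positivity) _ hc0
    simpa [add_comm] using Real.add_one_le_exp t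
  calc (1+t)^c ≤ (Real.exp t)^c := h1
    _ = Real.exp (t * c) := (Real.exp_mul t c).symm
    _ ≤ Real.exp (3 * t) := by apply Real.exp_le_exp.2; nlinarith

private lemma aux1 {c : ℝ} (hc0 : 0 ≤ c) (hc : c ≤ 3) (u : ℝ) :
    Real.exp (-u^2) ^ 2 * (1 + |u|) ^ c ≤ Real.exp 18 * Real.exp (-u^2) := by
  have h1 := aux_exp3 hc0 hc |u| (abs_nonneg u)
  have h2 : Real.exp (-u^2) ^ 2 = Real.exp (-(2*u^2)) := by
    rw [← Real.exp_nat_mul]; ring_nf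
  have h3 : Real.exp (-(2*u^2)) * Real.exp (3 * |u|) ≤ Real.exp 18 * Real.exp (-u^2) := by
    rw [← Real.exp_add, ← Real.exp_add]
    apply Real.exp_le_exp.2
    have := sq_abs u
    nlinarith [sq_nonneg (|u| - 3), abs_nonneg u]
  calc Real.exp (-u^2) ^ 2 * (1 + |u|) ^ c
      ≤ Real.exp (-(2*u^2)) * Real.exp (3 * |u|) := by
        rw [h2]; exact mul_le_mul_of_nonneg_left h1 (Real.exp_pos _).le
    _ ≤ _ := h3

private lemma aux2 {c : ℝ} (hc0 : 0 ≤ c) (hc : c ≤ 1) (x : ℝ) :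
    (1 + |x|) ^ (2 + c) * Real.exp (-(max (|x| - 1) 0)^2) ^ 2
      ≤ Real.exp 18 * Real.exp (-x^2) := by
  have h1 := aux_exp3 (c := 2 + c) (by linarith) (by linarith) |x| (abs_nonneg x)
  have h2 : Real.exp (-(max (|x| - 1) 0)^2) ^ 2 = Real.exp (-(2*(max (|x| - 1) 0)^2)) := by
    rw [← Real.exp_nat_mul]; ring_nf
  have h3 : Real.exp (3 * |x|) * Real.exp (-(2*(max (|x| - 1) 0)^2))
      ≤ Real.exp 18 * Real.exp (-x^2) := by
    rw [← Real.exp_add, ← Real.exp_add]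
    apply Real.exp_le_exp.2
    have hsq := sq_abs x
    rcases le_total (|x|) 1 with h|h
    · rw [max_eq_right (by linarith)]
      nlinarith [abs_nonneg x]
    · rw [max_eq_left (by linarith)]
      nlinarith [sq_nonneg (|x| - 7/2)]
  calc (1 + |x|) ^ (2 + c) * Real.exp (-(max (|x| - 1) 0)^2) ^ 2
      ≤ Real.exp (3 * |x|) * Real.exp (-(2*(max (|x| - 1) 0)^2)) := by
        rw [h2]; exact mul_le_mul_of_nonneg_right h1 (Real.exp_pos _).le
    _ ≤ _ := h3

private lemma mvt_exp (x h : ℝ) (hh : |h| ≤ 1) :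
    |Real.exp (-(x+h)^2) - Real.exp (-x^2)|
      ≤ (2 * (1+|x|) * Real.exp (-(max (|x|-1) 0)^2)) * |h| := by
  set C := 2 * (1+|x|) * Real.exp (-(max (|x|-1) 0)^2) with hC
  have habs := abs_le.1 hh
  have hder : ∀ t ∈ Icc (x-1) (x+1),
      HasDerivWithinAt (fun t : ℝ => Real.exp (-t^2))
        (Real.exp (-t^2) * (-(2*t))) (Icc (x-1) (x+1)) t := by
    intro t _
    have h1 : HasDerivAt (fun t : ℝ => -t^2) (-(2*t)) t := by
      simpa using (hasDerivAt_pow 2 t).fun_neg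
    exact h1.exp.hasDerivWithinAt
  have bound : ∀ t ∈ Icc (x-1) (x+1), ‖Real.exp (-t^2) * (-(2*t))‖ ≤ C := by
    intro t ht
    have h1 : |t - x| ≤ 1 := by
      rw [abs_le]; constructor <;> [linarith [ht.1]; linarith [ht.2]]
    have h2 : |t| ≤ 1 + |x| := by
      have := abs_add_le (t - x) x; simp only [sub_add_cancel] at this; linarith
    have h3 : max (|x|-1) 0 ≤ |t| := by
      apply max_le _ (abs_nonneg t)
      have := abs_sub_abs_le_abs_sub x t
      rw [abs_sub_comm] at h1; linarith
    have h4 : Real.exp (-t^2) ≤ Real.exp (-(max (|x|-1) 0)^2) := by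
      apply Real.exp_le_exp.2
      have hm : 0 ≤ max (|x|-1) 0 := le_max_right _ _
      nlinarith [sq_abs t]
    rw [norm_mul, Real.norm_eq_abs, Real.norm_eq_abs,
      abs_of_pos (Real.exp_pos _), abs_neg]
    have h5 : |2 * t| = 2 * |t| := by rw [abs_mul]; norm_num
    rw [h5, hC]
    calc Real.exp (-t^2) * (2 * |t|) ≤ Real.exp (-(max (|x|-1) 0)^2) * (2 * (1+|x|)) := by
          apply mul_le_mul h4 (by linarith) (by positivity) (Real.exp_pos _).le
      _ = 2 * (1+|x|) * Real.exp (-(max (|x|-1) 0)^2) := by ring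
  have hmem1 : x ∈ Icc (x-1) (x+1) := by constructor <;> linarith
  have hmem2 : x + h ∈ Icc (x-1) (x+1) := by constructor <;> linarith
  have := (convex_Icc (x-1) (x+1)).norm_image_sub_le_of_norm_hasDerivWithin_le
    hder bound hmem1 hmem2
  simpa [Real.norm_eq_abs] using this

private lemma bound_small (H θ x h : ℝ) (hθ0 : 0 < θ) (hθ1 : 2*θ ≤ 1) (hh : |h| ≤ 1) :
    |Real.exp (-(x+h)^2) - Real.exp (-x^2)|^2 * |h|^(2*H-2) * |x|^(2*θ)
      ≤ 4 * (min 1 (h^2) * |h|^(2*H-2) * (1+|h|)^(2*θ)) *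
        (Real.exp 18 * Real.exp (-x^2) + Real.exp 18 * Real.exp (-(x+h)^2)) := by
  set C := 2 * (1+|x|) * Real.exp (-(max (|x|-1) 0)^2) with hCdef
  have hC0 : 0 ≤ C := by positivity
  set a := |h|^(2*H-2) with ha
  have ha0 : 0 ≤ a := Real.rpow_nonneg (abs_nonneg h) _
  set b := |x|^(2*θ) with hb
  have hb0 : 0 ≤ b := Real.rpow_nonneg (abs_nonneg x) _
  have h1 : |Real.exp (-(x+h)^2) - Real.exp (-x^2)|^2 ≤ C^2 * h^2 := by
    have := mvt_exp x h hh
    calc |Real.exp (-(x+h)^2) - Real.exp (-x^2)|^2 ≤ (C * |h|)^2 := by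
          apply pow_le_pow_left₀ (abs_nonneg _) this
      _ = C^2 * h^2 := by rw [mul_pow, sq_abs]
  have key : C^2 * b ≤ 4 * (Real.exp 18 * Real.exp (-x^2)) := by
    have e1 : C^2 = 4 * ((1+|x|)^(2:ℕ) * Real.exp (-(max (|x|-1) 0)^2)^2) := by
      rw [hCdef]; ring
    have e2 : b ≤ (1+|x|)^(2*θ) := by
      apply Real.rpow_le_rpow (abs_nonneg x) (by linarith [abs_nonneg x]) (by linarith)
    have e3 : ((1+|x|):ℝ)^(2:ℕ) * (1+|x|)^(2*θ) = (1+|x|)^(2+2*θ) := by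
      rw [Real.rpow_add (by positivity), Real.rpow_two]
    calc C^2 * b = 4 * ((1+|x|)^(2:ℕ) * Real.exp (-(max (|x|-1) 0)^2)^2) * b := by rw [e1]
      _ ≤ 4 * ((1+|x|)^(2:ℕ) * Real.exp (-(max (|x|-1) 0)^2)^2) * (1+|x|)^(2*θ) := by
          apply mul_le_mul_of_nonneg_left e2 (by positivity)
      _ = 4 * ((1+|x|)^(2+2*θ) * Real.exp (-(max (|x|-1) 0)^2)^2) := by
          rw [← e3]; ring
      _ ≤ 4 * (Real.exp 18 * Real.exp (-x^2)) := by
          have := aux2 (c := 2*θ) (by linarith) hθ1 x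
          linarith
  have h2min : min 1 (h^2) = h^2 := min_eq_right (by nlinarith [sq_abs h, abs_nonneg h])
  have hP : 1 ≤ (1+|h|)^(2*θ) := Real.one_le_rpow (by linarith [abs_nonneg h]) (by linarith)
  have hE' : 0 ≤ Real.exp 18 * Real.exp (-(x+h)^2) := by positivity
  calc |Real.exp (-(x+h)^2) - Real.exp (-x^2)|^2 * a * b
      ≤ (C^2 * h^2) * a * b := by
        apply mul_le_mul_of_nonneg_right (mul_le_mul_of_nonneg_right h1 ha0) hb0
    _ = (C^2 * b) * (h^2 * a) := by ring
    _ ≤ (4 * (Real.exp 18 * Real.exp (-x^2))) * (h^2 * a) := by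
        apply mul_le_mul_of_nonneg_right key (by positivity)
    _ = 4 * (h^2 * a * 1) * (Real.exp 18 * Real.exp (-x^2)) := by ring
    _ ≤ 4 * (min 1 (h^2) * a * (1+|h|)^(2*θ)) *
        (Real.exp 18 * Real.exp (-x^2) + Real.exp 18 * Real.exp (-(x+h)^2)) := by
        rw [h2min]
        apply mul_le_mul
        · apply mul_le_mul_of_nonneg_left _ (by norm_num)
          exact mul_le_mul_of_nonneg_left hP (by positivity)
        · linarith
        · positivity
        · positivity

private lemma bound_large (H θ x h : ℝ) (hθ0 : 0 < θ) (hθ1 : 2*θ ≤ 1) (hh : 1 < |h|) :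
    |Real.exp (-(x+h)^2) - Real.exp (-x^2)|^2 * |h|^(2*H-2) * |x|^(2*θ)
      ≤ 4 * (min 1 (h^2) * |h|^(2*H-2) * (1+|h|)^(2*θ)) *
        (Real.exp 18 * Real.exp (-x^2) + Real.exp 18 * Real.exp (-(x+h)^2)) := by
  set a := |h|^(2*H-2) with ha
  have ha0 : 0 ≤ a := Real.rpow_nonneg (abs_nonneg h) _
  set b := |x|^(2*θ) with hb
  have hb0 : 0 ≤ b := Real.rpow_nonneg (abs_nonneg x) _
  set E := Real.exp (-x^2) with hE
  set E' := Real.exp (-(x+h)^2) with hE'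
  have hE0 : 0 < E := Real.exp_pos _
  have hE'0 : 0 < E' := Real.exp_pos _
  set P := (1+|h|)^(2*θ) with hPdef
  have hP : 1 ≤ P := Real.one_le_rpow (by linarith [abs_nonneg h]) (by linarith)
  have hA : |E' - E| ≤ E' + E := abs_le.mpr ⟨by linarith, by linarith⟩
  have hA2 : |E' - E|^2 ≤ 2*E^2 + 2*E'^2 := by
    have := pow_le_pow_left₀ (abs_nonneg _) hA 2
    nlinarith [sq_nonneg (E' - E)]
  have claim1 : E^2 * b ≤ Real.exp 18 * E := by
    have e2 : b ≤ (1+|x|)^(2*θ) :=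
      Real.rpow_le_rpow (abs_nonneg x) (by linarith [abs_nonneg x]) (by linarith)
    calc E^2 * b ≤ E^2 * (1+|x|)^(2*θ) := by
          apply mul_le_mul_of_nonneg_left e2 (by positivity)
      _ ≤ Real.exp 18 * E := aux1 (by linarith) (by linarith) x
  have claim2 : E'^2 * b ≤ P * (Real.exp 18 * E') := by
    have hxb : |x| ≤ (1+|h|) * (1+|x+h|) := by
      have h1 : |x| ≤ |x+h| + |h| := by
        have := abs_add_le (x+h) (-h); simpa using this
      nlinarith [abs_nonneg h, abs_nonneg (x+h)]
    have e2 : b ≤ P * (1+|x+h|)^(2*θ) := by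
      rw [hb, hPdef, ← Real.mul_rpow (by positivity) (by positivity)]
      exact Real.rpow_le_rpow (abs_nonneg x) hxb (by linarith)
    calc E'^2 * b ≤ E'^2 * (P * (1+|x+h|)^(2*θ)) := by
          apply mul_le_mul_of_nonneg_left e2 (by positivity)
      _ = P * (E'^2 * (1+|x+h|)^(2*θ)) := by ring
      _ ≤ P * (Real.exp 18 * E') := by
          apply mul_le_mul_of_nonneg_left (aux1 (by linarith) (by linarith) (x+h)) (by positivity)
  have hmin : min 1 (h^2) = 1 := min_eq_left (by nlinarith [sq_abs h])
  rw [hmin]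
  have hX0 : (0:ℝ) ≤ Real.exp 18 * E := by positivity
  have hY0 : (0:ℝ) ≤ Real.exp 18 * E' := by positivity
  calc |E' - E|^2 * a * b ≤ (2*E^2 + 2*E'^2) * a * b := by
        apply mul_le_mul_of_nonneg_right (mul_le_mul_of_nonneg_right hA2 ha0) hb0
    _ = 2*((E^2*b)*a) + 2*((E'^2*b)*a) := by ring
    _ ≤ 2*((Real.exp 18 * E)*a) + 2*((P * (Real.exp 18 * E'))*a) := by gcongr
    _ ≤ 4 * (1 * a * P) * (Real.exp 18 * E + Real.exp 18 * E') := by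
        nlinarith [mul_nonneg (mul_nonneg ha0 hX0) (by linarith : (0:ℝ) ≤ 2*P-1),
          mul_nonneg (mul_nonneg ha0 hY0) (by linarith : (0:ℝ) ≤ P)]

private lemma integrable_phi (H θ : ℝ) (hH1 : 1/4 < H) (hH2 : H < 1/2)
    (hθ0 : 0 < θ) (hθ1 : θ < 1/2 - H) :
    Integrable (fun h : ℝ => min 1 (h^2) * |h|^(2*H-2) * (1+|h|)^(2*θ)) := by
  have mφ : Measurable (fun h : ℝ => min 1 (h^2) * |h|^(2*H-2) * (1+|h|)^(2*θ)) := by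
    measurability
  apply integrable_of_even'
  · intro x; simp [neg_sq, abs_neg]
  · have hsplit : Ioi (0:ℝ) = Ioo 0 1 ∪ Ici 1 := (Ioo_union_Ici_eq_Ioi zero_lt_one).symm
    rw [hsplit, integrableOn_union]
    constructor
    · have base : IntegrableOn (fun x : ℝ => 2 * x ^ (2*H)) (Ioo (0:ℝ) 1) :=
        ((intervalIntegral.integrableOn_Ioo_rpow_iff zero_lt_one).2 (by linarith)).const_mul 2
      apply base.mono' (mφ.aestronglyMeasurable.restrict)
      filter_upwards [ae_restrict_mem measurableSet_Ioo] with x hx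
      obtain ⟨hx0, hx1⟩ := hx
      have habs : |x| = x := abs_of_pos hx0
      have h1 : min 1 (x^2) ≤ x^2 := min_le_right _ _
      have h2 : (1+|x|)^(2*θ) ≤ 2 := by
        calc (1+|x|)^(2*θ) ≤ (2:ℝ)^(2*θ) := by
              apply Real.rpow_le_rpow (by positivity) (by rw [habs]; linarith) (by linarith)
          _ ≤ (2:ℝ)^(1:ℝ) := by
              apply Real.rpow_le_rpow_of_exponent_le one_le_two (by linarith)
          _ = 2 := Real.rpow_one 2
      have h3 : x^2 * x^(2*H-2) = x^(2*H) := by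
        rw [← Real.rpow_two, ← Real.rpow_add hx0]; norm_num
      have hnn : (0:ℝ) ≤ min 1 (x^2) * |x|^(2*H-2) * (1+|x|)^(2*θ) := by positivity
      rw [Real.norm_eq_abs, abs_of_nonneg hnn, habs]
      calc min 1 (x^2) * x^(2*H-2) * (1+x)^(2*θ)
          ≤ x^2 * x^(2*H-2) * 2 := by
            rw [habs] at h2
            apply mul_le_mul (mul_le_mul_of_nonneg_right h1 (by positivity)) h2
              (by positivity) (by positivity)
        _ = 2 * x^(2*H) := by rw [h3]; ring
    · rw [integrableOn_Ici_iff_integrableOn_Ioi]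
      have base : IntegrableOn (fun x : ℝ => 2 * x ^ (2*H-2+2*θ)) (Ioi (1:ℝ)) :=
        ((integrableOn_Ioi_rpow_iff zero_lt_one).2 (by linarith)).const_mul 2
      apply base.mono' (mφ.aestronglyMeasurable.restrict)
      filter_upwards [ae_restrict_mem measurableSet_Ioi] with x hx
      have hx1 : (1:ℝ) < x := hx
      have hx0 : (0:ℝ) < x := lt_trans zero_lt_one hx1
      have habs : |x| = x := abs_of_pos hx0
      have h1 : min 1 (x^2) ≤ 1 := min_le_left _ _
      have h2 : (1+|x|)^(2*θ) ≤ 2 * x^(2*θ) := by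
        calc (1+|x|)^(2*θ) ≤ (2*x)^(2*θ) := by
              apply Real.rpow_le_rpow (by positivity) (by rw [habs]; linarith) (by linarith)
          _ = (2:ℝ)^(2*θ) * x^(2*θ) := Real.mul_rpow (by norm_num) hx0.le
          _ ≤ 2 * x^(2*θ) := by
              apply mul_le_mul_of_nonneg_right _ (Real.rpow_nonneg hx0.le _)
              calc (2:ℝ)^(2*θ) ≤ (2:ℝ)^(1:ℝ) :=
                    Real.rpow_le_rpow_of_exponent_le one_le_two (by linarith)
                _ = 2 := Real.rpow_one 2
      have h3 : x^(2*H-2) * x^(2*θ) = x^(2*H-2+2*θ) := (Real.rpow_add hx0 _ _).symm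
      have hnn : (0:ℝ) ≤ min 1 (x^2) * |x|^(2*H-2) * (1+|x|)^(2*θ) := by positivity
      rw [Real.norm_eq_abs, abs_of_nonneg hnn, habs]
      calc min 1 (x^2) * x^(2*H-2) * (1+x)^(2*θ)
          ≤ 1 * x^(2*H-2) * (2 * x^(2*θ)) := by
            rw [habs] at h2
            apply mul_le_mul (mul_le_mul_of_nonneg_right h1 (by positivity)) h2
              (by positivity) (by positivity)
        _ = 2 * x^(2*H-2+2*θ) := by rw [← h3]; ring

private lemma meas_integrand (H θ : ℝ) : Measurable (fun q : ℝ × ℝ =>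
    |Real.exp (-(q.1 + q.2) ^ 2) - Real.exp (-q.1 ^ 2)| ^ 2 *
      |q.2| ^ (2 * H - 2) * |q.1| ^ (2 * θ)) := by
  measurability

end Stmt1Aux

/-- For every `H ∈ (1/4, 1/2)` and `θ ∈ (0, 1/2 − H)`, the double integral
`∫∫ |e^{−(x+h)²} − e^{−x²}|² |h|^{2H−2} |x|^{2θ} dh dx` is finite
(i.e. the integrand is Lebesgue-integrable on ℝ²). -/
theorem stmt1 (H θ : ℝ) (hH1 : 1 / 4 < H) (hH2 : H < 1 / 2)
    (hθ0 : 0 < θ) (hθ1 : θ < 1 / 2 - H) :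
    Integrable (fun q : ℝ × ℝ =>
      |Real.exp (-(q.1 + q.2) ^ 2) - Real.exp (-q.1 ^ 2)| ^ 2 *
        |q.2| ^ (2 * H - 2) * |q.1| ^ (2 * θ)) := by
  set φ : ℝ → ℝ := fun h => min 1 (h^2) * |h|^(2*H-2) * (1+|h|)^(2*θ) with hφdef
  set ψ : ℝ → ℝ := fun x => Real.exp 18 * Real.exp (-x^2) with hψdef
  have hφ : Integrable φ := integrable_phi H θ hH1 hH2 hθ0 hθ1
  have hψ : Integrable ψ := by
    have := (integrable_exp_neg_mul_sq (b := 1) one_pos).const_mul (Real.exp 18)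
    simpa [hψdef] using this
  have h1 : Integrable (fun q : ℝ × ℝ => ψ q.1 * φ q.2) := hψ.mul_prod hφ
  have h2 : Integrable (fun q : ℝ × ℝ => ψ (q.1 + q.2) * φ q.2) := by
    have hmp := measurePreserving_add_prod (volume : Measure ℝ) (volume : Measure ℝ)
    have := (hmp.integrable_comp h1.aestronglyMeasurable).2 h1
    simpa [Function.comp_def, Measure.volume_eq_prod] using this
  have hg : Integrable (fun q : ℝ × ℝ => 4 * φ q.2 * (ψ q.1 + ψ (q.1 + q.2))) := by
    have : (fun q : ℝ × ℝ => 4 * φ q.2 * (ψ q.1 + ψ (q.1 + q.2)))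
        = fun q => 4 * (ψ q.1 * φ q.2) + 4 * (ψ (q.1+q.2) * φ q.2) := by
      funext q; ring
    rw [this]
    exact ((h1.const_mul 4).add (h2.const_mul 4))
  apply hg.mono'
  · exact (meas_integrand H θ).aestronglyMeasurable
  · apply Filter.Eventually.of_forall
    intro q
    have hnn : (0:ℝ) ≤ |Real.exp (-(q.1 + q.2) ^ 2) - Real.exp (-q.1 ^ 2)| ^ 2 *
        |q.2| ^ (2 * H - 2) * |q.1| ^ (2 * θ) := by positivity
    rw [Real.norm_eq_abs, abs_of_nonneg hnn]
    have hθ1' : 2*θ ≤ 1 := by linarith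
    rcases le_or_gt (|q.2|) 1 with hc | hc
    · exact bound_small H θ q.1 q.2 hθ0 hθ1' hc
    · exact bound_large H θ q.1 q.2 hθ0 hθ1' hc
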